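/- Derivative of the Poisson kernel under the jumping direction: let P(x_1+ix_2+jy; z) = y(1+|z|^2)/(|z-(x_1+ix_2)|^2 + y^2) be the Poisson kernel of H^3 at boundary point z ∈ C, and let δ > 0. Then for the point j (x_1=x_2=0, y=1) and boundary point z = e^{iφ} tan(θ/2) corresponding to Euler angles (φ,θ), the derivative of P^δ at j in the direction of J^+ equals -δ sin θ e^{iφ}. -/

import Mathlib

open Complex Real

/-- The Poisson kernel of `ℍ³` at the point `x₁ + i x₂ + j y` and boundary
point `z ∈ ℂ`: `P = y(1+|z|²)/(|z-(x₁+ix₂)|² + y²)`. -/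
noncomputable def poissonKernelH3 (x₁ x₂ y : ℝ) (z : ℂ) : ℝ :=
  y * (1 + Complex.normSq z) / (Complex.normSq (z - (x₁ + x₂ * Complex.I)) + y ^ 2)

lemma deriv_aux (c d δ : ℝ) (hd : 0 < d) :
    HasDerivAt (fun ε : ℝ => ((c ^ 2 + d) / ((c + ε) ^ 2 + d)) ^ δ)
      (-2 * c * δ / (c ^ 2 + d)) 0 := by
  have hC : (0:ℝ) < c ^ 2 + d := by positivity
  have hden : HasDerivAt (fun ε : ℝ => (c + ε) ^ 2 + d) (2 * c) 0 := by
    have h1 : HasDerivAt (fun ε : ℝ => c + ε) 1 0 := (hasDerivAt_id 0).const_add c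
    have h2 := (h1.pow 2).add_const d
    simpa using h2
  have hf : HasDerivAt (fun ε : ℝ => (c ^ 2 + d) / ((c + ε) ^ 2 + d))
      (-(c ^ 2 + d) * (2 * c) / ((c + 0) ^ 2 + d) ^ 2) 0 := by
    have : HasDerivAt (fun ε : ℝ => (c ^ 2 + d) / ((c + ε) ^ 2 + d)) _ 0 :=
      (hasDerivAt_const (0:ℝ) (c ^ 2 + d)).div hden (by positivity)
    convert this using 1
    ring
  have hf0 : (c ^ 2 + d) / ((c + 0) ^ 2 + d) = 1 := by
    rw [add_zero]; field_simp
  have hg := hf.rpow_const (p := δ) (Or.inl (by rw [hf0]; norm_num))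
  convert hg using 1
  rw [hf0]
  rw [Real.one_rpow]
  field_simp
  ring

theorem poisson_jump_derivative (δ : ℝ) (hδ : 0 < δ) (φ θ : ℝ) :
    let z : ℂ := Complex.exp (Complex.I * φ) * Real.tan (θ / 2)
    ((deriv (fun ε : ℝ => poissonKernelH3 (-ε) 0 1 z ^ δ) 0 : ℝ) : ℂ)
      + Complex.I * ((deriv (fun ε : ℝ => poissonKernelH3 0 (-ε) 1 z ^ δ) 0 : ℝ) : ℂ)
      = -δ * Real.sin θ * Complex.exp (Complex.I * φ) := by
  intro z
  set t : ℝ := Real.tan (θ / 2) with ht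
  set a : ℝ := z.re with ha
  set b : ℝ := z.im with hb
  -- normSq z = t ^ 2
  have hnz : Complex.normSq z = t ^ 2 := by
    have habs : ‖Complex.exp (Complex.I * φ)‖ = 1 := by
      simp [Complex.norm_exp]
    rw [show z = Complex.exp (Complex.I * φ) * (t : ℂ) from rfl, Complex.normSq_mul,
      Complex.normSq_ofReal, ← Complex.sq_norm, habs]
    ring
  have hab : a ^ 2 + b ^ 2 = t ^ 2 := by
    rw [ha, hb, sq, sq, ← Complex.normSq_apply]; exact hnz
  -- first derivative
  have key1 : (fun ε : ℝ => poissonKernelH3 (-ε) 0 1 z ^ δ)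
      = fun ε : ℝ => ((a ^ 2 + (b ^ 2 + 1)) / ((a + ε) ^ 2 + (b ^ 2 + 1))) ^ δ := by
    funext ε
    have hz : z - ((↑(-ε) : ℂ) + (↑(0:ℝ)) * Complex.I) = Complex.mk (a + ε) b := by
      apply Complex.ext <;> simp [ha, hb]
    simp only [poissonKernelH3, hz]
    rw [Complex.normSq_mk, Complex.normSq_apply, ← ha, ← hb]
    ring_nf
  have key2 : (fun ε : ℝ => poissonKernelH3 0 (-ε) 1 z ^ δ)
      = fun ε : ℝ => ((b ^ 2 + (a ^ 2 + 1)) / ((b + ε) ^ 2 + (a ^ 2 + 1))) ^ δ := by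
    funext ε
    have hz : z - ((↑(0:ℝ) : ℂ) + (↑(-ε)) * Complex.I) = Complex.mk a (b + ε) := by
      apply Complex.ext <;> simp [ha, hb]
    simp only [poissonKernelH3, hz]
    rw [Complex.normSq_mk, Complex.normSq_apply, ← ha, ← hb]
    ring_nf
  have d1 : deriv (fun ε : ℝ => poissonKernelH3 (-ε) 0 1 z ^ δ) 0
      = -2 * a * δ / (a ^ 2 + (b ^ 2 + 1)) := by
    rw [key1]; exact (deriv_aux a (b ^ 2 + 1) δ (by positivity)).deriv
  have d2 : deriv (fun ε : ℝ => poissonKernelH3 0 (-ε) 1 z ^ δ) 0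
      = -2 * b * δ / (b ^ 2 + (a ^ 2 + 1)) := by
    rw [key2]; exact (deriv_aux b (a ^ 2 + 1) δ (by positivity)).deriv
  rw [d1, d2]
  -- half-angle identity
  have hC : (0:ℝ) < 1 + t ^ 2 := by positivity
  have hsin : Real.sin θ = 2 * t / (1 + t ^ 2) := by
    have hθ : θ = 2 * (θ / 2) := by ring
    rw [hθ, Real.sin_two_mul, ht]
    rcases eq_or_ne (Real.cos (θ / 2)) 0 with h | h
    · simp [Real.tan_eq_sin_div_cos, h]
    · rw [Real.tan_eq_sin_div_cos]
      have hpy : Real.sin (θ / 2) ^ 2 + Real.cos (θ / 2) ^ 2 = 1 := Real.sin_sq_add_cos_sq _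
      field_simp
      linear_combination (Real.sin (θ / 2)) * hpy
  -- z = a + b I
  have hzab : z = (a : ℂ) + (b : ℂ) * Complex.I := by
    rw [ha, hb]; exact (Complex.re_add_im z).symm
  have hzt : z = Complex.exp (Complex.I * φ) * (t : ℂ) := rfl
  have hden : a ^ 2 + (b ^ 2 + 1) = 1 + t ^ 2 := by linarith [hab]
  have hden' : b ^ 2 + (a ^ 2 + 1) = 1 + t ^ 2 := by linarith [hab]
  rw [hden, hden', hsin]
  have : ((-2 * a * δ / (1 + t ^ 2) : ℝ) : ℂ)
      + Complex.I * ((-2 * b * δ / (1 + t ^ 2) : ℝ) : ℂ)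
      = (-2 * δ / ((1 + t ^ 2 : ℝ) : ℂ)) * z := by
    rw [hzab]
    push_cast
    have hne : ((1:ℂ) + (t:ℂ) ^ 2) ≠ 0 := by
      have h0 : ((1 + t ^ 2 : ℝ) : ℂ) ≠ 0 := Complex.ofReal_ne_zero.2 (by positivity)
      push_cast at h0; exact h0
    field_simp
    ring
  rw [this, hzt]
  push_cast
  have hne : ((1:ℂ) + (t:ℂ) ^ 2) ≠ 0 := by
    have h0 : ((1 + t ^ 2 : ℝ) : ℂ) ≠ 0 := Complex.ofReal_ne_zero.2 (by positivity)
    push_cast at h0; exact h0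
  field_simp
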